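/- The product of two Hausdorff topological groups is an s-group if and only if both factors are s-groups. -/

import Mathlib

open Filter Topology Pointwise


/-- `u` converges to the identity in the group topology `t`. -/
def TendstoOne {G : Type*} [Group G] (t : GroupTopology G) (u : ℕ → G) : Prop :=
  Filter.Tendsto u Filter.atTop (@nhds G t.toTopologicalSpace 1)

/-- The group topology `t` is Hausdorff. -/
def IsHausdorffGT {G : Type*} [Group G] (t : GroupTopology G) : Prop :=
  @T2Space G t.toTopologicalSpace

/-- `S` is a `T_s`-set of sequences: some Hausdorff group topology makes every
sequence of `S` converge to the identity. -/
def IsTsSet {G : Type*} [Group G] (S : Set (ℕ → G)) : Prop :=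
  ∃ t : GroupTopology G, IsHausdorffGT t ∧ ∀ u ∈ S, TendstoOne t u

/-- `τ` is the finest Hausdorff group topology on `G` in which every sequence of `S`
converges to the identity (recall that in Mathlib's order on topologies, finer = smaller). -/
def IsTauS {G : Type*} [Group G] (S : Set (ℕ → G)) (τ : GroupTopology G) : Prop :=
  IsHausdorffGT τ ∧ (∀ u ∈ S, TendstoOne τ u) ∧
    ∀ t : GroupTopology G, IsHausdorffGT t → (∀ u ∈ S, TendstoOne t u) → τ ≤ t

/-- The given topological-group structure on `G`, as a term of `GroupTopology G`. -/
def ambientGT (G : Type*) [Group G] [τ : TopologicalSpace G] [h : IsTopologicalGroup G] :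
    GroupTopology G := ⟨τ, h⟩

/-- The set of all sequences converging to the identity in a group topology. -/
def SeqConvOne {G : Type*} [Group G] (t : GroupTopology G) : Set (ℕ → G) :=
  {u | TendstoOne t u}

/-- `(G, τ)` is an `s`-group: its topology is the finest Hausdorff group topology in which
every member of some `T_s`-set of sequences converges to the identity. -/
def IsSGroup (G : Type*) [Group G] [TopologicalSpace G] [IsTopologicalGroup G] [T2Space G] :
    Prop :=
  ∃ S : Set (ℕ → G), IsTauS S (ambientGT G)

/-- The product of two group topologies. -/
def prodGT {G H : Type*} [Group G] [Group H] (t : GroupTopology G) (s : GroupTopology H) :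
    GroupTopology (G × H) :=
  letI := t.toTopologicalSpace
  letI := s.toTopologicalSpace
  haveI := t.toIsTopologicalGroup
  haveI := s.toIsTopologicalGroup
  ⟨instTopologicalSpaceProd, inferInstance⟩

/-- The group topology induced along a monoid hom. -/
def inducedGT {G H : Type*} [Group G] [Group H] (f : G →* H) (t : GroupTopology H) :
    GroupTopology G :=
  letI := t.toTopologicalSpace
  haveI := t.toIsTopologicalGroup
  ⟨TopologicalSpace.induced f t.toTopologicalSpace, topologicalGroup_induced f⟩

/-- Composition of continuous maps, with all topologies explicit. -/
theorem cont_comp_aux {X Y Z : Type*} (tX : TopologicalSpace X) (tY : TopologicalSpace Y)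
    (tZ : TopologicalSpace Z) {g : Y → Z} {f : X → Y}
    (hg : @Continuous Y Z tY tZ g) (hf : @Continuous X Y tX tY f) :
    @Continuous X Z tX tZ (g ∘ f) := by
  letI := tX; letI := tY; letI := tZ
  exact hg.comp hf

/-- Product of continuous maps into a topological magma, with all topologies explicit. -/
theorem cont_mul_aux {X M : Type*} [Mul M] (tX : TopologicalSpace X) (tM : TopologicalSpace M)
    (hm : @ContinuousMul M tM _) {f g : X → M}
    (hf : @Continuous X M tX tM f) (hg : @Continuous X M tX tM g) :
    @Continuous X M tX tM (fun x => f x * g x) := by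
  letI := tX; letI := tM; haveI := hm
  exact hf.mul hg

/-- Characterization of `s`-groups as a minimality property of the ambient topology. -/
theorem isSGroup_iff {G : Type*} [Group G] [TopologicalSpace G] [IsTopologicalGroup G]
    [T2Space G] :
    IsSGroup G ↔ ∀ t : GroupTopology G, IsHausdorffGT t →
      (∀ u : ℕ → G, TendstoOne (ambientGT G) u → TendstoOne t u) → ambientGT G ≤ t := by
  constructor
  · rintro ⟨S, _hH, hS, hmin⟩ t ht htS
    exact hmin t ht fun u hu => htS u (hS u hu)
  · intro h
    exact ⟨SeqConvOne (ambientGT G), ‹T2Space G›, fun u hu => hu, fun t ht hS => h t ht hS⟩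

/-- the product of two Hausdorff topological groups is an `s`-group iff both
factors are `s`-groups. -/
theorem stmt9 {G H : Type*} [Group G] [TopologicalSpace G] [IsTopologicalGroup G] [T2Space G]
    [Group H] [TopologicalSpace H] [IsTopologicalGroup H] [T2Space H] :
    IsSGroup (G × H) ↔ IsSGroup G ∧ IsSGroup H := by
  simp only [isSGroup_iff]
  constructor
  · -- product s-group → both factors s-groups
    intro hP
    constructor
    · -- G is an s-group
      intro t ht htS
      set t' : GroupTopology (G × H) := prodGT t (ambientGT H) with ht'def
      have ht' : IsHausdorffGT t' := by
        letI := t.toTopologicalSpace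
        haveI : T2Space G := ht
        exact (inferInstance : T2Space (G × H))
      have hseq : ∀ u : ℕ → G × H, TendstoOne (ambientGT (G × H)) u → TendstoOne t' u := by
        intro u hu
        have h1 : Tendsto (fun n => (u n).1) atTop (𝓝 (1 : G)) :=
          (continuous_fst.tendsto (1 : G × H)).comp hu
        have h2 : Tendsto (fun n => (u n).2) atTop (𝓝 (1 : H)) :=
          (continuous_snd.tendsto (1 : G × H)).comp hu
        have h1' : Tendsto (fun n => (u n).1) atTop (@nhds G t.toTopologicalSpace 1) :=
          htS _ h1
        letI := t.toTopologicalSpace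
        show Tendsto u atTop (𝓝 (1 : G × H))
        exact h1'.prodMk_nhds h2
      have hle : ambientGT (G × H) ≤ t' := hP t' ht' hseq
      have c1 : Continuous (fun g : G => ((g, 1) : G × H)) :=
        continuous_id.prodMk continuous_const
      have c2 : @Continuous (G × H) (G × H) instTopologicalSpaceProd t'.toTopologicalSpace id :=
        continuous_id_iff_le.mpr hle
      have c3 : @Continuous (G × H) G t'.toTopologicalSpace t.toTopologicalSpace Prod.fst := by
        letI := t.toTopologicalSpace
        exact continuous_fst
      have c21 := cont_comp_aux ‹TopologicalSpace G› instTopologicalSpaceProd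
        t'.toTopologicalSpace c2 c1
      have hcont := cont_comp_aux ‹TopologicalSpace G› t'.toTopologicalSpace
        t.toTopologicalSpace c3 c21
      have heq : (Prod.fst ∘ (id ∘ fun g : G => ((g, 1) : G × H))) = id := rfl
      rw [heq] at hcont
      exact continuous_id_iff_le.mp hcont
    · -- H is an s-group
      intro t ht htS
      set t' : GroupTopology (G × H) := prodGT (ambientGT G) t with ht'def
      have ht' : IsHausdorffGT t' := by
        letI := t.toTopologicalSpace
        haveI : T2Space H := ht
        exact (inferInstance : T2Space (G × H))
      have hseq : ∀ u : ℕ → G × H, TendstoOne (ambientGT (G × H)) u → TendstoOne t' u := by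
        intro u hu
        have h1 : Tendsto (fun n => (u n).1) atTop (𝓝 (1 : G)) :=
          (continuous_fst.tendsto (1 : G × H)).comp hu
        have h2 : Tendsto (fun n => (u n).2) atTop (𝓝 (1 : H)) :=
          (continuous_snd.tendsto (1 : G × H)).comp hu
        have h2' : Tendsto (fun n => (u n).2) atTop (@nhds H t.toTopologicalSpace 1) :=
          htS _ h2
        letI := t.toTopologicalSpace
        show Tendsto u atTop (𝓝 (1 : G × H))
        exact h1.prodMk_nhds h2'
      have hle : ambientGT (G × H) ≤ t' := hP t' ht' hseq
      have c1 : Continuous (fun h : H => ((1, h) : G × H)) :=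
        continuous_const.prodMk continuous_id
      have c2 : @Continuous (G × H) (G × H) instTopologicalSpaceProd t'.toTopologicalSpace id :=
        continuous_id_iff_le.mpr hle
      have c3 : @Continuous (G × H) H t'.toTopologicalSpace t.toTopologicalSpace Prod.snd := by
        letI := t.toTopologicalSpace
        exact continuous_snd
      have c21 := cont_comp_aux ‹TopologicalSpace H› instTopologicalSpaceProd
        t'.toTopologicalSpace c2 c1
      have hcont := cont_comp_aux ‹TopologicalSpace H› t'.toTopologicalSpace
        t.toTopologicalSpace c3 c21
      have heq : (Prod.snd ∘ (id ∘ fun h : H => ((1, h) : G × H))) = id := rfl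
      rw [heq] at hcont
      exact continuous_id_iff_le.mp hcont
  · -- both factors s-groups → product is an s-group
    rintro ⟨hPG, hPH⟩ t ht htS
    set f : G →* G × H := MonoidHom.inl G H with hfdef
    set g : H →* G × H := MonoidHom.inr G H with hgdef
    set tG : GroupTopology G := inducedGT f t with htGdef
    set tH : GroupTopology H := inducedGT g t with htHdef
    -- the induced topologies are Hausdorff
    have hHG : IsHausdorffGT tG := by
      letI := t.toTopologicalSpace
      haveI : T2Space (G × H) := ht
      letI : TopologicalSpace G := TopologicalSpace.induced (⇑f) t.toTopologicalSpace
      have he : Topology.IsEmbedding (⇑f) :=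
        ⟨⟨rfl⟩, fun a b h => congrArg Prod.fst h⟩
      exact he.t2Space
    have hHH : IsHausdorffGT tH := by
      letI := t.toTopologicalSpace
      haveI : T2Space (G × H) := ht
      letI : TopologicalSpace H := TopologicalSpace.induced (⇑g) t.toTopologicalSpace
      have he : Topology.IsEmbedding (⇑g) :=
        ⟨⟨rfl⟩, fun a b h => congrArg Prod.snd h⟩
      exact he.t2Space
    -- null sequences of the factors stay null in the induced topologies
    have hseqG : ∀ u : ℕ → G, TendstoOne (ambientGT G) u → TendstoOne tG u := by
      intro u hu
      have h1 : Tendsto (fun n => ((u n, 1) : G × H)) atTop (𝓝 (1 : G × H)) :=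
        hu.prodMk_nhds tendsto_const_nhds
      have h2 : Tendsto (fun n => ((u n, 1) : G × H)) atTop
          (@nhds (G × H) t.toTopologicalSpace 1) := htS _ h1
      letI := t.toTopologicalSpace
      letI : TopologicalSpace G := TopologicalSpace.induced (⇑f) t.toTopologicalSpace
      have hi : Topology.IsInducing (⇑f) := ⟨rfl⟩
      exact hi.tendsto_nhds_iff.mpr h2
    have hseqH : ∀ u : ℕ → H, TendstoOne (ambientGT H) u → TendstoOne tH u := by
      intro u hu
      have h1 : Tendsto (fun n => ((1, u n) : G × H)) atTop (𝓝 (1 : G × H)) :=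
        tendsto_const_nhds.prodMk_nhds hu
      have h2 : Tendsto (fun n => ((1, u n) : G × H)) atTop
          (@nhds (G × H) t.toTopologicalSpace 1) := htS _ h1
      letI := t.toTopologicalSpace
      letI : TopologicalSpace H := TopologicalSpace.induced (⇑g) t.toTopologicalSpace
      have hi : Topology.IsInducing (⇑g) := ⟨rfl⟩
      exact hi.tendsto_nhds_iff.mpr h2
    have hleG : ambientGT G ≤ tG := hPG tG hHG hseqG
    have hleH : ambientGT H ≤ tH := hPH tH hHH hseqH
    have cf : @Continuous G (G × H) ‹TopologicalSpace G› t.toTopologicalSpace (⇑f) :=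
      continuous_iff_le_induced.mpr hleG
    have cg : @Continuous H (G × H) ‹TopologicalSpace H› t.toTopologicalSpace (⇑g) :=
      continuous_iff_le_induced.mpr hleH
    have hfst : @Continuous (G × H) (G × H) instTopologicalSpaceProd t.toTopologicalSpace
        (⇑f ∘ Prod.fst) :=
      cont_comp_aux instTopologicalSpaceProd ‹TopologicalSpace G› t.toTopologicalSpace
        cf (@continuous_fst G H _ _)
    have hgsnd : @Continuous (G × H) (G × H) instTopologicalSpaceProd t.toTopologicalSpace
        (⇑g ∘ Prod.snd) :=
      cont_comp_aux instTopologicalSpaceProd ‹TopologicalSpace H› t.toTopologicalSpace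
        cg (@continuous_snd G H _ _)
    have hCM : @ContinuousMul (G × H) t.toTopologicalSpace _ := by
      letI := t.toTopologicalSpace
      haveI := t.toIsTopologicalGroup
      exact inferInstance
    have h1 : @Continuous (G × H) (G × H) instTopologicalSpaceProd t.toTopologicalSpace
        (fun p => (⇑f ∘ Prod.fst) p * (⇑g ∘ Prod.snd) p) :=
      cont_mul_aux instTopologicalSpaceProd t.toTopologicalSpace hCM hfst hgsnd
    have heq : (fun p : G × H => (⇑f ∘ Prod.fst) p * (⇑g ∘ Prod.snd) p) = id := by
      funext p
      simp [hfdef, hgdef, Prod.ext_iff]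
    rw [heq] at h1
    exact continuous_id_iff_le.mp h1
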